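/- arXiv:1703.00563 — 2 statements merged into one kernel-verified Lean document; each statement's English description precedes it below -/
import Mathlib

section
/- Let k be a field, V a discrete valuation ring containing k with fraction field K, normalized valuation v : K^× → ℤ, and residue field equal to k, and let O ⊆ V be a local k-subalgebra with fraction field K such that δ = dim_k(V/O) is finite. Then the complement of the value semigroup S = { v(z) : z ∈ O, z ≠ 0 } in ℕ is finite of cardinality exactly δ, i.e. #(ℕ \ S) = dim_k(V/O). -/
/-- Let `k` be a field, `V` a discrete valuation ring containing `k` with
fraction field `K`, normalized valuation `v : K^× → ℤ` and residue field `k`, and let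
`O ⊆ V` be a local `k`-subalgebra with fraction field `K` such that `δ = dim_k (V/O)` is
finite.  Then the complement in `ℕ` of the value semigroup `S = { v z : z ∈ O, z ≠ 0 }`
is finite of cardinality exactly `δ`, i.e. `#(ℕ \ S) = dim_k (V/O)`. -/
theorem universal_zeta_stmt_5
    (k V K : Type*) [Field k] [CommRing V] [IsDomain V] [IsDiscreteValuationRing V]
    [Algebra k V] [Field K] [Algebra V K] [IsFractionRing V K]
    -- `v` is the normalized valuation of `V` on `K^×`:
    (v : K → ℤ)
    (hv_mul : ∀ x y : K, x ≠ 0 → y ≠ 0 → v (x * y) = v x + v y)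
    (hv_add : ∀ x y : K, x ≠ 0 → y ≠ 0 → x + y ≠ 0 → min (v x) (v y) ≤ v (x + y))
    (hv_surj : ∀ m : ℤ, ∃ x : K, x ≠ 0 ∧ v x = m)
    (hv_ring : ∀ x : K, x ≠ 0 → (0 ≤ v x ↔ ∃ z : V, algebraMap V K z = x))
    -- `V` has residue field `k`:
    (hres : Function.Bijective ((IsLocalRing.residue V).comp (algebraMap k V)))
    -- `O` is a local `k`-subalgebra of `V`:
    (O : Subalgebra k V) [IsLocalRing O]
    -- whose fraction field equals `K`:
    (hfrac : ∀ x : K, ∃ a b : O, b ≠ 0 ∧ algebraMap V K (b : V) * x = algebraMap V K (a : V))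
    -- and such that `δ = dim_k (V/O)` is finite:
    [FiniteDimensional k (V ⧸ Subalgebra.toSubmodule O)] :
    {n : ℕ | ¬ ∃ z : O, (z : V) ≠ 0 ∧ v (algebraMap V K (z : V)) = (n : ℤ)}.Finite ∧
      {n : ℕ | ¬ ∃ z : O, (z : V) ≠ 0 ∧ v (algebraMap V K (z : V)) = (n : ℤ)}.ncard =
        Module.finrank k (V ⧸ Subalgebra.toSubmodule O) := by
  classical
  suffices H : ∀ P : ℕ → Prop,
      (∀ n, P n ↔ ∃ z : O, (z : V) ≠ 0 ∧ v (algebraMap V K (z : V)) = (n : ℤ)) →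
      ({n | ¬ P n}.Finite ∧
        {n | ¬ P n}.ncard = Module.finrank k (V ⧸ Subalgebra.toSubmodule O)) by
    exact H _ fun n => Iff.rfl
  intro P hP
  obtain ⟨π, hπ⟩ := IsDiscreteValuationRing.exists_irreducible V
  have hπ0 : π ≠ 0 := hπ.ne_zero
  have hinj : Function.Injective (algebraMap V K) := IsFractionRing.injective V K
  have hmap0 : ∀ z : V, z ≠ 0 → algebraMap V K z ≠ 0 := by
    intro z hz h
    exact hz (hinj (by rw [h, map_zero]))
  -- v 1 = 0
  have hv1 : v 1 = 0 := by
    have := hv_mul 1 1 one_ne_zero one_ne_zero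
    rw [mul_one] at this
    omega
  -- v of a unit is 0
  have hvunit : ∀ u : Vˣ, v (algebraMap V K (u : V)) = 0 := by
    intro u
    have h1 : 0 ≤ v (algebraMap V K (u : V)) :=
      (hv_ring _ (hmap0 _ u.ne_zero)).mpr ⟨u, rfl⟩
    have h2 : 0 ≤ v (algebraMap V K ((u⁻¹ : Vˣ) : V)) :=
      (hv_ring _ (hmap0 _ (u⁻¹).ne_zero)).mpr ⟨(u⁻¹ : Vˣ), rfl⟩
    have h3 : v (algebraMap V K (u : V)) + v (algebraMap V K ((u⁻¹ : Vˣ) : V)) = 0 := by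
      rw [← hv_mul _ _ (hmap0 _ u.ne_zero) (hmap0 _ (u⁻¹).ne_zero), ← map_mul,
        Units.mul_inv, map_one, hv1]
    omega
  have hvpow : ∀ t : ℕ, v (algebraMap V K (π ^ t)) = t * v (algebraMap V K π) := by
    intro t
    induction t with
    | zero => simpa using hv1
    | succ t ih =>
      rw [pow_succ, map_mul, hv_mul _ _ (hmap0 _ (pow_ne_zero t hπ0)) (hmap0 _ hπ0), ih]
      push_cast; ring
  have hvfac : ∀ (u : Vˣ) (t : ℕ),
      v (algebraMap V K ((u : V) * π ^ t)) = t * v (algebraMap V K π) := by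
    intro u t
    rw [map_mul, hv_mul _ _ (hmap0 _ u.ne_zero) (hmap0 _ (pow_ne_zero t hπ0)), hvunit,
      zero_add, hvpow]
  -- v π = 1
  have hvπ : v (algebraMap V K π) = 1 := by
    obtain ⟨x, hx0, hx1⟩ := hv_surj 1
    obtain ⟨z, rfl⟩ := (hv_ring x hx0).mp (by rw [hx1]; norm_num)
    have hz0 : z ≠ 0 := fun h => hx0 (by rw [h, map_zero])
    obtain ⟨t, u, rfl⟩ := IsDiscreteValuationRing.eq_unit_mul_pow_irreducible hz0 hπ
    rw [hvfac u t] at hx1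
    have hge : 0 ≤ v (algebraMap V K π) :=
      (hv_ring _ (hmap0 _ hπ0)).mpr ⟨π, rfl⟩
    have : IsUnit (v (algebraMap V K π)) :=
      IsUnit.of_mul_eq_one (t : ℤ) (by rw [mul_comm]; exact hx1)
    rcases Int.isUnit_iff.mp this with h | h <;> omega
  -- the key valuation characterization
  have hval : ∀ (z : V) (n : ℕ),
      (z ≠ 0 ∧ v (algebraMap V K z) = (n : ℤ)) ↔ ∃ u : Vˣ, z = (u : V) * π ^ n := by
    intro z n
    constructor
    · rintro ⟨hz0, hzn⟩
      obtain ⟨t, u, rfl⟩ := IsDiscreteValuationRing.eq_unit_mul_pow_irreducible hz0 hπ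
      rw [hvfac u t, hvπ, mul_one] at hzn
      have : t = n := by exact_mod_cast hzn
      exact ⟨u, by rw [this]⟩
    · rintro ⟨u, rfl⟩
      refine ⟨mul_ne_zero u.ne_zero (pow_ne_zero _ hπ0), ?_⟩
      rw [hvfac u n, hvπ, mul_one]
  -- residue field decomposition : V = k + m
  have hdec : ∀ x : V, ∃ c : k, x - algebraMap k V c ∈ IsLocalRing.maximalIdeal V := by
    intro x
    obtain ⟨c, hc⟩ := hres.2 (IsLocalRing.residue V x)
    refine ⟨c, ?_⟩
    rw [← IsLocalRing.residue_eq_zero_iff, map_sub]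
    rw [RingHom.comp_apply] at hc
    rw [hc, sub_self]
  have hπm : π ∈ IsLocalRing.maximalIdeal V := by
    rw [hπ.maximalIdeal_eq]
    exact Ideal.mem_span_singleton_self π
  have hmem : ∀ (x : V) (n : ℕ), x ∈ IsLocalRing.maximalIdeal V ^ n ↔ π ^ n ∣ x := by
    intro x n
    rw [hπ.maximalIdeal_eq, Ideal.span_singleton_pow, Ideal.mem_span_singleton]
  -- conductor : m^c ⊆ O
  have hcond : ∃ c : ℕ, ∀ x : V, x ∈ IsLocalRing.maximalIdeal V ^ c → x ∈ O := by
    obtain ⟨r, f, hf⟩ := Module.Finite.exists_fin (R := k) (M := V ⧸ Subalgebra.toSubmodule O)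
    choose g hg using Submodule.mkQ_surjective (Subalgebra.toSubmodule O)
    choose a b hb0 hab using fun i : Fin r => hfrac (algebraMap V K (g (f i)))
    have hbg : ∀ i, (b i : V) * g (f i) = (a i : V) := by
      intro i
      apply hinj
      rw [map_mul]
      exact hab i
    set bV : V := ∏ i : Fin r, (b i : V) with hbVdef
    have hbO : bV ∈ O := prod_mem fun i _ => (b i).2
    have hbne : bV ≠ 0 :=
      Finset.prod_ne_zero_iff.mpr fun i _ h => hb0 i (Subtype.ext h)
    have hspan : ∀ y ∈ Submodule.span k (Set.range fun i => g (f i)), bV * y ∈ O := by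
      intro y hy
      induction hy using Submodule.span_induction with
      | mem z hz =>
        obtain ⟨i, rfl⟩ := hz
        have hb : bV = (b i : V) * ∏ j ∈ Finset.univ.erase i, (b j : V) :=
          (Finset.mul_prod_erase _ _ (Finset.mem_univ i)).symm
        rw [hb, mul_assoc, mul_comm ((b i : V)) _]
        rw [mul_comm ((∏ j ∈ Finset.univ.erase i, (b j : V)) * g (f i)) ((b i : V))]
        rw [← mul_assoc, mul_comm ((b i : V)) _, mul_assoc, hbg i]
        exact mul_mem (prod_mem fun j _ => (b j).2) (a i).2
      | zero => simpa using O.zero_mem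
      | add u w hu hw ihu ihw => rw [mul_add]; exact add_mem ihu ihw
      | smul c u hu ihu => rw [mul_smul_comm]; exact O.smul_mem ihu c
    have hmulO : ∀ x : V, bV * x ∈ O := by
      intro x
      have hx : Submodule.mkQ (Subalgebra.toSubmodule O) x ∈
          Submodule.map (Submodule.mkQ (Subalgebra.toSubmodule O))
            (Submodule.span k (Set.range fun i => g (f i))) := by
        rw [Submodule.map_span, ← Set.range_comp]
        have hcomp : (⇑(Submodule.mkQ (Subalgebra.toSubmodule O)) ∘ fun i => g (f i)) = f := by
          funext i
          exact hg (f i)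
        rw [hcomp, hf]
        exact Submodule.mem_top
      obtain ⟨y, hy, hyx⟩ := hx
      have hxy : x - y ∈ Subalgebra.toSubmodule O := by
        have := (Submodule.Quotient.eq (Subalgebra.toSubmodule O)).mp hyx
        have h2 := neg_mem this
        rwa [neg_sub] at h2
      have : bV * x = bV * (x - y) + bV * y := by ring
      rw [this]
      exact add_mem (mul_mem hbO hxy) (hspan y hy)
    obtain ⟨t, u, hbu⟩ := IsDiscreteValuationRing.eq_unit_mul_pow_irreducible hbne hπ
    refine ⟨t, fun x hx => ?_⟩
    obtain ⟨y, rfl⟩ := (hmem x t).mp hx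
    have hrw : π ^ t * y = bV * ((↑(u⁻¹) : V) * y) := by
      rw [hbu]
      have h1 : ((u : V) * (↑(u⁻¹) : V)) = 1 := by
        rw [← Units.val_mul, mul_inv_cancel, Units.val_one]
      calc π ^ t * y = ((u : V) * (↑(u⁻¹) : V)) * (π ^ t * y) := by rw [h1, one_mul]
        _ = (u : V) * π ^ t * ((↑(u⁻¹) : V) * y) := by ring
    rw [hrw]
    exact hmulO _
  -- gap characterization
  have hSchar : ∀ n : ℕ, P n ↔ (π ^ n : V) ∈ Subalgebra.toSubmodule O ⊔
      Submodule.restrictScalars k (IsLocalRing.maximalIdeal V ^ (n + 1)) := by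
    intro n
    rw [hP n, Submodule.mem_sup]
    constructor
    · rintro ⟨z, hz0, hzv⟩
      obtain ⟨u, hzu⟩ := (hval (↑z) n).mp ⟨hz0, hzv⟩
      obtain ⟨cc, hcc⟩ := hdec ((↑(u⁻¹) : V))
      refine ⟨algebraMap k V cc * ↑z, ?_, ((↑(u⁻¹) : V) - algebraMap k V cc) * ↑z, ?_, ?_⟩
      · rw [Subalgebra.mem_toSubmodule]
        exact mul_mem (O.algebraMap_mem cc) z.2
      · rw [Submodule.restrictScalars_mem, pow_succ]
        have hzm : (↑z : V) ∈ IsLocalRing.maximalIdeal V ^ n :=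
          (hmem _ n).mpr ⟨(u : V), by rw [hzu]; ring⟩
        rw [mul_comm ((↑(u⁻¹) : V) - algebraMap k V cc) (↑z : V)]
        exact Ideal.mul_mem_mul hzm hcc
      · have hui : ((↑(u⁻¹) : V)) * ↑z = π ^ n := by
          rw [hzu, ← mul_assoc, ← Units.val_mul, inv_mul_cancel, Units.val_one, one_mul]
        calc algebraMap k V cc * ↑z + ((↑(u⁻¹) : V) - algebraMap k V cc) * ↑z
            = (↑(u⁻¹) : V) * ↑z := by ring
          _ = π ^ n := hui
    · rintro ⟨z, hz, w, hw, hzw⟩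
      rw [Submodule.restrictScalars_mem] at hw
      obtain ⟨y, hy⟩ := (hmem w (n + 1)).mp hw
      have hπy : π * y ∈ IsLocalRing.maximalIdeal V :=
        Ideal.mul_mem_right y _ hπm
      have hu : IsUnit (1 - π * y) := by
        by_contra hnu
        have h1 : (1 - π * y) ∈ IsLocalRing.maximalIdeal V :=
          (IsLocalRing.mem_maximalIdeal _).mpr (mem_nonunits_iff.mpr hnu)
        have h2 : (1 : V) ∈ IsLocalRing.maximalIdeal V := by
          have := add_mem h1 hπy
          simpa using this
        exact mem_nonunits_iff.mp ((IsLocalRing.mem_maximalIdeal _).mp h2) isUnit_one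
      have hz' : z = ↑hu.unit * π ^ n := by
        rw [IsUnit.unit_spec]
        have hzeq : z = π ^ n - w := by rw [← hzw]; ring
        rw [hzeq, hy, pow_succ]
        ring
      rw [Subalgebra.mem_toSubmodule] at hz
      exact ⟨⟨z, hz⟩, (hval z n).mpr ⟨hu.unit, hz'⟩⟩
  -- the filtration
  set D : ℕ → Submodule k (V ⧸ Subalgebra.toSubmodule O) := fun n =>
    Submodule.map (Submodule.mkQ (Subalgebra.toSubmodule O))
      (Submodule.restrictScalars k (IsLocalRing.maximalIdeal V ^ n)) with hD
  have hDsup : ∀ n : ℕ,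
      D n = D (n + 1) ⊔ (k ∙ Submodule.mkQ (Subalgebra.toSubmodule O) (π ^ n)) := by
    intro n
    apply le_antisymm
    · rintro xq hxq
      rw [hD] at hxq
      obtain ⟨x, hx, rfl⟩ := hxq
      have hx2 : x ∈ IsLocalRing.maximalIdeal V ^ n := hx
      obtain ⟨y, rfl⟩ := (hmem x n).mp hx2
      obtain ⟨cc, hcc⟩ := hdec y
      rw [Submodule.mem_sup]
      refine ⟨Submodule.mkQ (Subalgebra.toSubmodule O) (π ^ n * (y - algebraMap k V cc)), ?_,
        cc • Submodule.mkQ (Subalgebra.toSubmodule O) (π ^ n), ?_, ?_⟩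
      · rw [hD]
        refine Submodule.mem_map_of_mem ?_
        rw [Submodule.restrictScalars_mem, pow_succ]
        exact Ideal.mul_mem_mul (Ideal.pow_mem_pow hπm n) hcc
      · exact Submodule.smul_mem _ _ (Submodule.mem_span_singleton_self _)
      · rw [← map_smul, ← map_add]
        congr 1
        rw [Algebra.smul_def]
        ring
    · rw [sup_le_iff]
      constructor
      · rw [hD]
        apply Submodule.map_mono
        intro x hx
        rw [Submodule.restrictScalars_mem] at hx ⊢
        exact Ideal.pow_le_pow_right (Nat.le_succ n) hx
      · rw [Submodule.span_le, Set.singleton_subset_iff, hD]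
        exact Submodule.mem_map_of_mem
          (by rw [Submodule.restrictScalars_mem]; exact Ideal.pow_mem_pow hπm n)
  have hDx : ∀ n : ℕ,
      (Submodule.mkQ (Subalgebra.toSubmodule O) (π ^ n) ∈ D (n + 1)) ↔ P n := by
    intro n
    rw [hD]
    constructor
    · rintro ⟨w, hw, hwq⟩
      rw [hSchar n, Submodule.mem_sup]
      have hmem' : π ^ n - w ∈ Subalgebra.toSubmodule O := by
        have h1 := (Submodule.Quotient.eq (Subalgebra.toSubmodule O)).mp hwq
        have h2 := neg_mem h1
        rwa [neg_sub] at h2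
      exact ⟨π ^ n - w, hmem', w, hw, by ring⟩
    · intro h
      rw [hSchar n, Submodule.mem_sup] at h
      obtain ⟨z, hz, w, hw, hzw⟩ := h
      refine ⟨w, hw, ?_⟩
      rw [Submodule.mkQ_apply, Submodule.mkQ_apply, Submodule.Quotient.eq]
      have : w - π ^ n = -z := by rw [← hzw]; ring
      rw [this]
      exact neg_mem hz
  have hstep : ∀ n : ℕ, Module.finrank k (D n) =
      Module.finrank k (D (n + 1)) + (if P n then 0 else 1) := by
    intro n
    by_cases h : P n
    · rw [if_pos h, add_zero]
      have hx := (hDx n).mpr h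
      have hEq : D n = D (n + 1) := by
        rw [hDsup n]
        exact sup_eq_left.mpr ((Submodule.span_le).mpr (Set.singleton_subset_iff.mpr hx))
      rw [hEq]
    · rw [if_neg h]
      have hx : Submodule.mkQ (Subalgebra.toSubmodule O) (π ^ n) ∉ D (n + 1) :=
        fun hm => h ((hDx n).mp hm)
      have hx0 : Submodule.mkQ (Subalgebra.toSubmodule O) (π ^ n) ≠ 0 :=
        fun h0 => hx (h0 ▸ (D (n + 1)).zero_mem)
      have hinf : D (n + 1) ⊓ (k ∙ Submodule.mkQ (Subalgebra.toSubmodule O) (π ^ n)) = ⊥ := by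
        rw [eq_bot_iff]
        intro y hy
        rw [Submodule.mem_inf] at hy
        obtain ⟨hy1, hy2⟩ := hy
        obtain ⟨cc, rfl⟩ := Submodule.mem_span_singleton.mp hy2
        rcases eq_or_ne cc 0 with rfl | hcc
        · simp
        · exact absurd (by simpa [smul_smul, inv_mul_cancel₀ hcc]
            using (D (n + 1)).smul_mem cc⁻¹ hy1) hx
      have hrk := Submodule.finrank_sup_add_finrank_inf_eq (D (n + 1))
        (k ∙ Submodule.mkQ (Subalgebra.toSubmodule O) (π ^ n))
      rw [hinf, finrank_bot, finrank_span_singleton hx0, add_zero] at hrk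
      rw [hDsup n]
      exact hrk
  have hD0 : D 0 = ⊤ := by
    rw [hD]
    simp only [pow_zero, Ideal.one_eq_top, Submodule.restrictScalars_top, Submodule.map_top,
      Submodule.range_mkQ]
  have hT : ∀ N : ℕ, Module.finrank k (V ⧸ Subalgebra.toSubmodule O) =
      (∑ n ∈ Finset.range N, if P n then 0 else 1) + Module.finrank k (D N) := by
    intro N
    induction N with
    | zero =>
      rw [Finset.range_zero, Finset.sum_empty, zero_add, hD0]
      exact (finrank_top k _).symm
    | succ N ih =>
      rw [Finset.sum_range_succ, ih, hstep N]
      ring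
  obtain ⟨c, hc⟩ := hcond
  have hDc : D c = ⊥ := by
    rw [eq_bot_iff, hD]
    rintro _ ⟨x, hx, rfl⟩
    have hx2 : x ∈ IsLocalRing.maximalIdeal V ^ c := hx
    rw [Submodule.mem_bot, Submodule.mkQ_apply, Submodule.Quotient.mk_eq_zero]
    exact hc x hx2
  have hδ : Module.finrank k (V ⧸ Subalgebra.toSubmodule O) =
      ∑ n ∈ Finset.range c, if P n then 0 else 1 := by
    have := hT c
    rwa [hDc, finrank_bot, add_zero] at this
  have hSge : ∀ n : ℕ, c ≤ n → P n := by
    intro n hcn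
    rw [hP n]
    have hmemO : π ^ n ∈ O :=
      hc _ (Ideal.pow_le_pow_right hcn (Ideal.pow_mem_pow hπm n))
    exact ⟨⟨π ^ n, hmemO⟩, (hval (π ^ n) n).mpr ⟨1, by simp⟩⟩
  have hGF : {n : ℕ | ¬ P n} = ↑((Finset.range c).filter fun n => ¬ P n) := by
    ext n
    simp only [Set.mem_setOf_eq, Finset.coe_filter, Finset.mem_range]
    constructor
    · intro h
      exact ⟨by by_contra hn; exact h (hSge n (le_of_not_gt hn)), h⟩
    · exact fun h => h.2
  refine ⟨hGF ▸ Finset.finite_toSet _, ?_⟩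
  rw [hGF, Set.ncard_coe_finset, Finset.card_filter, hδ]
  exact Finset.sum_congr rfl fun n _ => by by_cases h : P n <;> simp [h]
end

section
/- Let F_q be a finite field, V a complete discrete valuation ring containing F_q with fraction field K, normalized valuation v, and residue field equal to F_q, and let O ⊆ V be a local F_q-subalgebra with fraction field K, maximal ideal m_O = m_V ∩ O, and δ = dim_{F_q}(V/O) finite. Then O^× has finite index in V^× and [V^× : O^×] = q^δ. -/
open IsLocalRing

lemma aux_count {G F : Type*} [AddCommGroup G] [AddCommGroup F] [Finite G]
    (f : G → F) (hadd : ∀ x y, f (x + y) = f x + f y) (hf : Function.Surjective f) :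
    Nat.card G = Nat.card F * Nat.card {g : G // f g = 0} ∧
    Nat.card {g : G // f g ≠ 0} = (Nat.card F - 1) * Nat.card {g : G // f g = 0} := by
  classical
  set f' : G →+ F := AddMonoidHom.mk' f hadd with hf'
  have hFfin : Finite F := Finite.of_surjective f hf
  have hker : Nat.card {g : G // f g = 0} = Nat.card f'.ker :=
    Nat.card_congr (Equiv.subtypeEquivRight fun g => (AddMonoidHom.mem_ker (f := f')).symm)
  have h1 : Nat.card G = Nat.card F * Nat.card {g : G // f g = 0} := by
    rw [hker, AddSubgroup.card_eq_card_quotient_mul_card_addSubgroup f'.ker,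
      Nat.card_congr (QuotientAddGroup.quotientKerEquivOfSurjective f' hf).toEquiv]
  refine ⟨h1, ?_⟩
  have hsplit : Nat.card {g : G // f g = 0} + Nat.card {g : G // f g ≠ 0} = Nat.card G := by
    rw [← Nat.card_sum]
    exact Nat.card_congr (Equiv.sumCompl fun g => f g = 0)
  have hF : 1 ≤ Nat.card F := Nat.card_pos
  have hk : Nat.card {g : G // f g = 0} ≤ Nat.card F * Nat.card {g : G // f g = 0} :=
    Nat.le_mul_of_pos_left _ (by omega)
  rw [Nat.sub_mul, one_mul]
  omega

lemma aux_finite_quot {Fq V : Type*} [Field Fq] [Fintype Fq] [CommRing V] [IsDomain V]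
    [IsDiscreteValuationRing V] [Algebra Fq V]
    (hres : Function.Surjective ((IsLocalRing.residue V).comp (algebraMap Fq V)))
    (π : V) (hπ : Irreducible π) :
    ∀ k : ℕ, Finite (V ⧸ (Ideal.span {π ^ k} : Ideal V)) := by
  intro k
  induction k with
  | zero =>
    have h : (Ideal.span {π ^ 0} : Ideal V) = ⊤ := by simp [Ideal.span_singleton_one]
    have : Subsingleton (V ⧸ (Ideal.span {π ^ 0} : Ideal V)) := by
      rw [h]; exact Ideal.Quotient.subsingleton_iff.mpr rfl
    exact Finite.of_subsingleton
  | succ k ih =>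
    set Ik : Ideal V := Ideal.span {π ^ k} with hIk
    set Ik1 : Ideal V := Ideal.span {π ^ (k + 1)} with hIk1
    let s : (V ⧸ Ik) → V := Function.surjInv Ideal.Quotient.mk_surjective
    have hs : ∀ y, Ideal.Quotient.mk Ik (s y) = y :=
      fun y => Function.surjInv_eq Ideal.Quotient.mk_surjective y
    have : Function.Surjective
        (fun p : (V ⧸ Ik) × Fq =>
          Ideal.Quotient.mk Ik1 (s p.1 + algebraMap Fq V p.2 * π ^ k)) := by
      intro y
      obtain ⟨z, rfl⟩ := Ideal.Quotient.mk_surjective y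
      set y1 := Ideal.Quotient.mk Ik z with hy1
      have h1 : z - s y1 ∈ Ik := by
        rw [← Ideal.Quotient.eq_zero_iff_mem, map_sub, hs, hy1, sub_self]
      obtain ⟨t, ht⟩ := Ideal.mem_span_singleton'.mp h1
      obtain ⟨c, hc⟩ := hres (residue V t)
      have hmem : t - algebraMap Fq V c ∈ maximalIdeal V := by
        rw [← Ideal.Quotient.eq_zero_iff_mem]
        have : residue V (t - algebraMap Fq V c) = 0 := by
          rw [map_sub, ← hc]; simp [RingHom.comp_apply]
        exact this
      rw [(IsDiscreteValuationRing.irreducible_iff_uniformizer π).mp hπ] at hmem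
      obtain ⟨u, hu⟩ := Ideal.mem_span_singleton'.mp hmem
      refine ⟨(y1, c), ?_⟩
      have key : z - (s y1 + algebraMap Fq V c * π ^ k) ∈ Ik1 := by
        have : z - (s y1 + algebraMap Fq V c * π ^ k)
            = (t - algebraMap Fq V c) * π ^ k := by
          rw [sub_mul, ht]; ring
        rw [this, ← hu]
        exact Ideal.mem_span_singleton'.mpr ⟨u, by ring⟩
      exact (Ideal.Quotient.mk_eq_mk_iff_sub_mem _ _).mpr
        (by simpa using (Ik1.neg_mem key))
    exact Finite.of_surjective _ this

/-- Let `F_q` be a finite field, `V` a complete discrete valuation ring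
containing `F_q` with fraction field `K`, normalized valuation `v`, and residue field
`F_q`, and let `O ⊆ V` be a local `F_q`-subalgebra with fraction field `K`, maximal ideal
`m_O = m_V ∩ O`, and `δ = dim_{F_q} (V/O)` finite.  Then `O^×` has finite index in `V^×`
and `[V^× : O^×] = q^δ`. -/
theorem universal_zeta_stmt_6
    (Fq V K : Type*) [Field Fq] [Fintype Fq] [CommRing V] [IsDomain V]
    [IsDiscreteValuationRing V] [Algebra Fq V]
    -- `V` is complete:
    [IsAdicComplete (IsLocalRing.maximalIdeal V) V]
    [Field K] [Algebra V K] [IsFractionRing V K]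
    -- `v` is the normalized valuation of `V` on `K^×`:
    (v : K → ℤ)
    (hv_mul : ∀ x y : K, x ≠ 0 → y ≠ 0 → v (x * y) = v x + v y)
    (hv_add : ∀ x y : K, x ≠ 0 → y ≠ 0 → x + y ≠ 0 → min (v x) (v y) ≤ v (x + y))
    (hv_surj : ∀ m : ℤ, ∃ x : K, x ≠ 0 ∧ v x = m)
    (hv_ring : ∀ x : K, x ≠ 0 → (0 ≤ v x ↔ ∃ z : V, algebraMap V K z = x))
    -- `V` has residue field `F_q`:
    (hres : Function.Bijective ((IsLocalRing.residue V).comp (algebraMap Fq V)))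
    -- `O` is a local `F_q`-subalgebra of `V`:
    (O : Subalgebra Fq V) [IsLocalRing O]
    -- whose fraction field equals `K`:
    (hfrac : ∀ x : K, ∃ a b : O, b ≠ 0 ∧ algebraMap V K (b : V) * x = algebraMap V K (a : V))
    -- whose maximal ideal is `m_V ∩ O`:
    (hmax : ∀ z : O, z ∈ IsLocalRing.maximalIdeal O ↔ (z : V) ∈ IsLocalRing.maximalIdeal V)
    -- and such that `δ = dim_{F_q} (V/O)` is finite:
    [FiniteDimensional Fq (V ⧸ Subalgebra.toSubmodule O)]
    -- `H` is the image of `O^×` in `V^×`: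
    (H : Subgroup Vˣ)
    (hH : ∀ u : Vˣ, u ∈ H ↔ ((u : V) ∈ O ∧ ((u⁻¹ : Vˣ) : V) ∈ O)) :
    H.index ≠ 0 ∧
      H.index = Fintype.card Fq ^ Module.finrank Fq (V ⧸ Subalgebra.toSubmodule O) := by
  classical
  have hq2 : 2 ≤ Fintype.card Fq := Fintype.one_lt_card
  have hVK : Function.Injective (algebraMap V K) := IsFractionRing.injective V K
  -- Step A: construct a common denominator b ∈ O with b • V ⊆ O
  obtain ⟨b, hbne, hbO⟩ : ∃ b : O, (b : V) ≠ 0 ∧ ∀ x : V, (b : V) * x ∈ O := by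
    set μ := (Subalgebra.toSubmodule O).mkQ with hμ
    let β := Module.finBasis Fq (V ⧸ Subalgebra.toSubmodule O)
    choose w hw using fun i => (Subalgebra.toSubmodule O).mkQ_surjective (β i)
    choose a bb hbb hab using fun i => hfrac (algebraMap V K (w i))
    have hab' : ∀ i, (bb i : V) * w i = (a i : V) := by
      intro i; apply hVK; rw [map_mul]; exact hab i
    refine ⟨∏ i, bb i, ?_, ?_⟩
    · rw [SubmonoidClass.coe_finset_prod]
      exact Finset.prod_ne_zero_iff.mpr fun i _ =>
        fun h => hbb i (Subtype.coe_injective (h.trans (ZeroMemClass.coe_zero O).symm))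
    · intro x
      set c := β.repr (μ x) with hc
      have hmemO : x - ∑ i, c i • w i ∈ O := by
        rw [← Subalgebra.mem_toSubmodule]
        have h0 : μ (x - ∑ i, c i • w i) = 0 := by
          rw [map_sub, map_sum]
          simp only [map_smul, hμ, hw]
          rw [hc, β.sum_repr (μ x), hμ, sub_self]
        rw [← Submodule.Quotient.mk_eq_zero]
        exact h0
      have hbw : ∀ i, ((∏ j, bb j : O) : V) * w i ∈ O := by
        intro i
        have h1 : (∏ j, bb j : O) = bb i * ∏ j ∈ Finset.univ.erase i, bb j :=
          (Finset.mul_prod_erase Finset.univ bb (Finset.mem_univ i)).symm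
        rw [h1, MulMemClass.coe_mul, mul_comm ((bb i : V)), mul_assoc, hab' i]
        exact O.mul_mem (∏ j ∈ Finset.univ.erase i, bb j).2 (a i).2
      have hsum : ∑ i, c i • (((∏ j, bb j : O) : V) * w i)
          = ((∏ j, bb j : O) : V) * ∑ i, c i • w i := by
        rw [Finset.mul_sum]
        simp_rw [mul_smul_comm]
      have hdecomp : ((∏ i, bb i : O) : V) * x
          = ((∏ i, bb i : O) : V) * (x - ∑ i, c i • w i)
            + ∑ i, c i • (((∏ j, bb j : O) : V) * w i) := by
        rw [hsum]; ring
      rw [hdecomp]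
      exact O.add_mem (O.mul_mem (∏ i, bb i).2 hmemO)
        (Submodule.sum_mem _ fun i _ => (Subalgebra.toSubmodule O).smul_mem _ (hbw i))
  by_cases hbu : IsUnit (b : V)
  · -- trivial case : O = V
    have hO : ∀ x : V, x ∈ O := by
      intro x
      have h := hbO (((hbu.unit⁻¹ : Vˣ) : V) * x)
      rw [← mul_assoc] at h
      rw [hbu.mul_val_inv, one_mul] at h
      exact h
    have hHtop : H = ⊤ := by
      rw [Subgroup.eq_top_iff']
      exact fun u => (hH u).mpr ⟨hO _, hO _⟩
    have htop : Subalgebra.toSubmodule O = ⊤ := by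
      rw [Submodule.eq_top_iff']
      exact fun x => (Subalgebra.mem_toSubmodule O).mpr (hO x)
    have hsub : Subsingleton (V ⧸ Subalgebra.toSubmodule O) :=
      Submodule.Quotient.subsingleton_iff.mpr htop
    have hrk : Module.finrank Fq (V ⧸ Subalgebra.toSubmodule O) = 0 :=
      Module.finrank_zero_of_subsingleton
    rw [hHtop, Subgroup.index_top, hrk, pow_zero]
    exact ⟨one_ne_zero, rfl⟩
  · -- main case
    set I : Ideal V := Ideal.span {(b : V)} with hI
    have hIO : ∀ x ∈ I, x ∈ O := by
      intro x hx
      obtain ⟨y, hy⟩ := Ideal.mem_span_singleton'.mp hx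
      rw [← hy, mul_comm]
      exact hbO y
    have hIm : I ≤ maximalIdeal V := by
      rw [hI, Ideal.span_le, Set.singleton_subset_iff]
      exact (mem_maximalIdeal _).mpr (mem_nonunits_iff.mpr hbu)
    have hIbot : I ≠ ⊥ := by
      rw [hI, Ne, Ideal.span_singleton_eq_bot]; exact hbne
    obtain ⟨π, hπ⟩ := IsDiscreteValuationRing.exists_irreducible V
    obtain ⟨e, hIe⟩ := IsDiscreteValuationRing.ideal_eq_span_pow_irreducible hIbot hπ
    haveI hFinA : Finite (V ⧸ I) := by
      rw [hIe]; exact aux_finite_quot hres.surjective π hπ e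
    set φ := Ideal.Quotient.mk I with hφ
    set fmap : Vˣ →* (V ⧸ I)ˣ := Units.map (φ : V →* V ⧸ I) with hfmap
    have unit_iff : ∀ x : V, IsUnit (φ x) ↔ x ∉ maximalIdeal V := by
      intro x
      constructor
      · intro hx hxm
        obtain ⟨y0, hy0⟩ := hx.exists_right_inv
        obtain ⟨y, rfl⟩ := Ideal.Quotient.mk_surjective y0
        have hsub : x * y - 1 ∈ I := by
          rw [← Ideal.Quotient.eq_zero_iff_mem, map_sub, map_one, map_mul]
          rw [show Ideal.Quotient.mk I x = φ x from rfl,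
            show Ideal.Quotient.mk I y = φ y from rfl] at hy0 ⊢
          rw [hy0, sub_self]
        have h1 : (1 : V) ∈ maximalIdeal V := by
          have h2 := (maximalIdeal V).sub_mem
            (Ideal.mul_mem_right y _ hxm) (hIm hsub)
          simp only [sub_sub_cancel] at h2
          exact h2
        exact (maximalIdeal.isMaximal V).ne_top ((Ideal.eq_top_iff_one _).mpr h1)
      · intro hx
        have hxu : IsUnit x := by
          rw [mem_maximalIdeal, mem_nonunits_iff] at hx
          exact not_not.mp hx
        exact hxu.map φ
    have fsurj : Function.Surjective fmap := by
      intro wu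
      obtain ⟨x, hx⟩ := Ideal.Quotient.mk_surjective (wu : V ⧸ I)
      have hxu : IsUnit (φ x) := hx ▸ wu.isUnit
      have hxV : IsUnit x := by
        have := (unit_iff x).mp hxu
        rw [mem_maximalIdeal, mem_nonunits_iff] at this
        exact not_not.mp this
      refine ⟨hxV.unit, Units.ext ?_⟩
      rw [hfmap]
      show φ (hxV.unit : V) = (wu : V ⧸ I)
      rw [hxV.unit_spec, ← hx]
    have hker : fmap.ker ≤ H := by
      intro u hu
      rw [MonoidHom.mem_ker] at hu
      have key : ∀ z : V, φ z = 1 → z ∈ O := by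
        intro z hz
        have hz1 : z - 1 ∈ I := by
          rw [← Ideal.Quotient.eq_zero_iff_mem, map_sub, map_one,
            show Ideal.Quotient.mk I z = φ z from rfl, hz, sub_self]
        have hz2 : z = (z - 1) + 1 := by ring
        rw [hz2]
        exact O.add_mem (hIO _ hz1) O.one_mem
      have hval : φ (u : V) = 1 := by
        have h3 := congrArg Units.val hu
        simpa [hfmap] using h3
      have hval' : φ ((u⁻¹ : Vˣ) : V) = 1 := by
        have h4 : fmap u⁻¹ = 1 := by rw [map_inv, hu, inv_one]
        have h5 := congrArg Units.val h4
        simpa [hfmap] using h5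
      exact (hH u).mpr ⟨key _ hval, key _ hval'⟩
    have hmapeq : (H.map fmap).index = H.index := H.index_map_eq fsurj hker
    set eFq : Fq ≃+* ResidueField V :=
      RingEquiv.ofBijective ((residue V).comp (algebraMap Fq V)) hres with heFq
    set r : (V ⧸ I) →+* Fq :=
      (eFq.symm : ResidueField V →+* Fq).comp
        (Ideal.Quotient.factor hIm) with hr
    have hrφ : ∀ x : V, r (φ x) = eFq.symm (residue V x) := by
      intro x
      rfl
    have runit : ∀ y : V ⧸ I, (IsUnit y ↔ r y ≠ 0) := by
      intro y
      obtain ⟨x, rfl⟩ := Ideal.Quotient.mk_surjective y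
      rw [show Ideal.Quotient.mk I x = φ x from rfl, unit_iff, hrφ]
      have h0 : (eFq.symm (residue V x) = 0) ↔ x ∈ maximalIdeal V := by
        rw [EmbeddingLike.map_eq_zero_iff]
        exact Ideal.Quotient.eq_zero_iff_mem
      exact not_congr h0.symm
    have hresid : ∀ cc : Fq, residue V (algebraMap Fq V cc) = eFq cc := fun cc => rfl
    have rsurj : Function.Surjective r := by
      intro cc
      refine ⟨φ (algebraMap Fq V cc), ?_⟩
      rw [hrφ, hresid, RingEquiv.symm_apply_apply]
    set OB : Subring (V ⧸ I) := O.toSubring.map φ with hOB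
    set r' : OB →+* Fq := r.comp OB.subtype with hr'
    have r'surj : Function.Surjective r' := by
      intro cc
      refine ⟨⟨φ (algebraMap Fq V cc),
        ⟨algebraMap Fq V cc, Subalgebra.mem_toSubring.mpr (O.algebraMap_mem cc), rfl⟩⟩, ?_⟩
      show r (φ (algebraMap Fq V cc)) = cc
      rw [hrφ, hresid, RingEquiv.symm_apply_apply]
    obtain ⟨cA, cAne⟩ := aux_count (r : V ⧸ I → Fq) (map_add r) rsurj
    obtain ⟨cO, cOne⟩ := aux_count (r' : OB → Fq) (map_add r') r'surj
    -- identify units of V⧸I with nonvanishing of r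
    have cardAunits : Nat.card (V ⧸ I)ˣ = Nat.card {y : V ⧸ I // r y ≠ 0} := by
      apply Nat.card_congr
      refine Equiv.ofBijective (fun u => ⟨(u : V ⧸ I), (runit _).mp u.isUnit⟩) ⟨?_, ?_⟩
      · intro u1 u2 h12
        exact Units.ext (congrArg Subtype.val h12)
      · rintro ⟨y, hy⟩
        exact ⟨((runit y).mpr hy).unit, Subtype.ext ((runit y).mpr hy).unit_spec⟩
    -- identify image of H with nonvanishing of r'
    have memOB : ∀ w : (V ⧸ I)ˣ, w ∈ H.map fmap →
        ((w : V ⧸ I) ∈ OB ∧ ((w⁻¹ : (V ⧸ I)ˣ) : V ⧸ I) ∈ OB) := by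
      rintro w ⟨u, hu, rfl⟩
      obtain ⟨huO, huO'⟩ := (hH u).mp hu
      constructor
      · exact ⟨(u : V), Subalgebra.mem_toSubring.mpr huO, rfl⟩
      · rw [← map_inv]
        exact ⟨((u⁻¹ : Vˣ) : V), Subalgebra.mem_toSubring.mpr huO', rfl⟩
    have cardHmap : Nat.card ↥(H.map fmap) = Nat.card {o : OB // r' o ≠ 0} := by
      apply Nat.card_congr
      refine Equiv.ofBijective
        (fun w => ⟨⟨((w : ↥(H.map fmap)) : (V ⧸ I)ˣ), (memOB _ w.2).1⟩,
          (runit _).mp (w : ↥(H.map fmap)).1.isUnit⟩) ⟨?_, ?_⟩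
      · intro w1 w2 h12
        apply Subtype.ext
        apply Units.ext
        exact congrArg (fun z => (z : Subtype _).val) (congrArg Subtype.val h12)
      · rintro ⟨⟨y, hy⟩, hne⟩
        obtain ⟨o, hoO, hoy⟩ := hy
        have hoO' : o ∈ O := Subalgebra.mem_toSubring.mp hoO
        have hne' : r y ≠ 0 := hne
        have hyu : IsUnit y := (runit y).mpr hne'
        have hom : o ∉ maximalIdeal V := by
          rw [← unit_iff]
          rw [show φ o = y from hoy]
          exact hyu
        set oo : O := ⟨o, hoO'⟩ with hoo
        have hooU : IsUnit oo := by
          by_contra hnu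
          exact hom ((hmax oo).mp ((mem_maximalIdeal oo).mpr (mem_nonunits_iff.mpr hnu)))
        set uV : Vˣ := ⟨(oo : V), ((hooU.unit⁻¹ : Oˣ) : O),
          by exact_mod_cast congrArg Subtype.val hooU.mul_val_inv,
          by exact_mod_cast congrArg Subtype.val hooU.val_inv_mul⟩ with huV
        have huVH : uV ∈ H := by
          rw [hH]
          constructor
          · exact oo.2
          · exact ((hooU.unit⁻¹ : Oˣ) : O).2
        refine ⟨⟨fmap uV, Subgroup.mem_map.mpr ⟨uV, huVH, rfl⟩⟩, ?_⟩
        apply Subtype.ext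
        apply Subtype.ext
        show ((fmap uV : (V ⧸ I)ˣ) : V ⧸ I) = y
        rw [hfmap]
        show φ (uV : V) = y
        exact hoy
    have hidx : H.index * Nat.card ↥(H.map fmap) = Nat.card (V ⧸ I)ˣ := by
      rw [← hmapeq]
      exact Subgroup.index_mul_card _
    -- cardinality of V⧸I versus OB
    set ρ2 : V →+ (V ⧸ I) ⧸ OB.toAddSubgroup :=
      (QuotientAddGroup.mk' OB.toAddSubgroup).comp (AddMonoidHom.mk' φ (map_add φ)) with hρ2
    have ρ2surj : Function.Surjective ρ2 :=
      (QuotientAddGroup.mk'_surjective _).comp Ideal.Quotient.mk_surjective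
    have hkerρ2 : ρ2.ker = (Subalgebra.toSubmodule O).toAddSubgroup := by
      ext x
      rw [AddMonoidHom.mem_ker, hρ2, AddMonoidHom.comp_apply]
      rw [show (AddMonoidHom.mk' φ (map_add φ)) x = φ x from rfl]
      rw [QuotientAddGroup.mk'_apply, QuotientAddGroup.eq_zero_iff]
      constructor
      · rintro ⟨o, hoO, ho⟩
        have hxo : x - o ∈ I := by
          rw [← Ideal.Quotient.eq_zero_iff_mem, map_sub]
          rw [show Ideal.Quotient.mk I x = φ x from rfl,
            show Ideal.Quotient.mk I o = φ o from rfl, ho, sub_self]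
        have hx2 : x = (x - o) + o := by ring
        show x ∈ Subalgebra.toSubmodule O
        rw [Subalgebra.mem_toSubmodule, hx2]
        exact O.add_mem (hIO _ hxo) (Subalgebra.mem_toSubring.mp hoO)
      · intro hx
        exact ⟨x, Subalgebra.mem_toSubring.mpr ((Subalgebra.mem_toSubmodule O).mp hx), rfl⟩
    have cardeq1 : Nat.card ((V ⧸ I) ⧸ OB.toAddSubgroup)
        = Nat.card (V ⧸ Subalgebra.toSubmodule O) := by
      rw [← Nat.card_congr (QuotientAddGroup.quotientKerEquivOfSurjective ρ2 ρ2surj).toEquiv,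
        hkerρ2]
      rfl
    have cardOBeq : Nat.card OB.toAddSubgroup = Nat.card OB := rfl
    have cardA : Nat.card (V ⧸ I)
        = Nat.card OB * Nat.card (V ⧸ Subalgebra.toSubmodule O) := by
      rw [AddSubgroup.card_eq_card_quotient_mul_card_addSubgroup OB.toAddSubgroup,
        cardeq1, cardOBeq, mul_comm]
    have cardVO : Nat.card (V ⧸ Subalgebra.toSubmodule O)
        = Fintype.card Fq ^ Module.finrank Fq (V ⧸ Subalgebra.toSubmodule O) := by
      haveI : Finite (V ⧸ Subalgebra.toSubmodule O) := Module.finite_of_finite Fq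
      haveI := Fintype.ofFinite (V ⧸ Subalgebra.toSubmodule O)
      rw [Nat.card_eq_fintype_card]
      exact Module.card_eq_pow_finrank
    -- final arithmetic
    set q := Fintype.card Fq with hqdef
    set δ := Module.finrank Fq (V ⧸ Subalgebra.toSubmodule O) with hδdef
    set nA := Nat.card {y : V ⧸ I // r y = 0} with hnA
    set nO := Nat.card {o : OB // r' o = 0} with hnO
    have hcardFq : Nat.card Fq = q := Nat.card_eq_fintype_card
    rw [hcardFq] at cA cAne cO cOne
    have hnOpos : 0 < nO := by
      have hne0 : Nonempty {o : OB // r' o = 0} := ⟨⟨0, map_zero r'⟩⟩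
      rw [hnO]
      exact Nat.card_pos
    rw [cardAunits, cardHmap, cAne, cOne] at hidx
    rw [cA, cO, cardVO] at cardA
    have hnA_eq : nA = nO * q ^ δ := by
      apply Nat.eq_of_mul_eq_mul_left (show 0 < q by omega)
      rw [cardA]; ring
    have hidx2 : (q - 1) * (H.index * nO) = (q - 1) * nA := by
      rw [← hidx]; ring
    have hidx3 : H.index * nO = nA := Nat.eq_of_mul_eq_mul_left (by omega) hidx2
    have hfinal : H.index = q ^ δ := by
      apply Nat.eq_of_mul_eq_mul_right hnOpos
      rw [hidx3, hnA_eq]; ring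
    refine ⟨?_, hfinal⟩
    rw [hfinal]
    exact pow_ne_zero _ (by omega)
end
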